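/- Duality formula for the worst-case deviation term in rating covariances: let I be a finite set, x : I → {0,1}, δ : I × I → ℝ with δ_{ij} ≥ 0 for all (i,j) ∈ I × I, and Γ a natural number. Then max over subsets S ⊆ I × I with |S| ≤ Γ of Σ_{(i,j)∈S} δ_{ij} x_i x_j equals the minimum of Γ·z + Σ_{(i,j)∈I×I} q_{ij} over all z ∈ ℝ and q : I × I → ℝ satisfying z ≥ 0, q_{ij} ≥ 0 and z + q_{ij} ≥ δ_{ij} x_i x_j for all (i,j) ∈ I × I, and this minimum is attained. -/

import Mathlib

section
variable {I : Type*} [Fintype I]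

/-- Weak duality. -/
lemma weak_dual (f : I × I → ℝ) (Γ : ℕ) (S : Finset (I × I)) (hS : S.card ≤ Γ)
    (z : ℝ) (q : I × I → ℝ) (hz : 0 ≤ z) (hq : ∀ ij, 0 ≤ q ij)
    (hfeas : ∀ ij, f ij ≤ z + q ij) :
    ∑ ij ∈ S, f ij ≤ (Γ : ℝ) * z + ∑ ij : I × I, q ij := by
  calc ∑ ij ∈ S, f ij ≤ ∑ ij ∈ S, (z + q ij) := Finset.sum_le_sum fun ij _ => hfeas ij
    _ = (S.card : ℝ) * z + ∑ ij ∈ S, q ij := by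
        rw [Finset.sum_add_distrib, Finset.sum_const, nsmul_eq_mul]
    _ ≤ (Γ : ℝ) * z + ∑ ij : I × I, q ij := by
        have h1 : (S.card : ℝ) * z ≤ (Γ : ℝ) * z :=
          mul_le_mul_of_nonneg_right (by exact_mod_cast hS) hz
        have h2 : ∑ ij ∈ S, q ij ≤ ∑ ij : I × I, q ij :=
          Finset.sum_le_sum_of_subset_of_nonneg (Finset.subset_univ S)
            (fun ij _ _ => hq ij)
        linarith
end

theorem duality_worst_case_deviation_covariance
    {I : Type*} [Fintype I] (x : I → ℝ) (hx : ∀ i, x i = 0 ∨ x i = 1)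
    (δ : I × I → ℝ) (hδ : ∀ ij, 0 ≤ δ ij) (Γ : ℕ) :
    ∃ v : ℝ,
      IsGreatest {v : ℝ | ∃ S : Finset (I × I), S.card ≤ Γ ∧
          v = ∑ ij ∈ S, δ ij * x ij.1 * x ij.2} v ∧
      IsLeast {v : ℝ | ∃ (z : ℝ) (q : I × I → ℝ), 0 ≤ z ∧ (∀ ij, 0 ≤ q ij) ∧
          (∀ ij : I × I, δ ij * x ij.1 * x ij.2 ≤ z + q ij) ∧
          v = (Γ : ℝ) * z + ∑ ij : I × I, q ij} v := by
  classical
  set f : I × I → ℝ := fun ij => δ ij * x ij.1 * x ij.2 with hf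
  have hf0 : ∀ ij, 0 ≤ f ij := by
    intro ij
    have h1 : 0 ≤ x ij.1 := by rcases hx ij.1 with h | h <;> simp [h]
    have h2 : 0 ≤ x ij.2 := by rcases hx ij.2 with h | h <;> simp [h]
    exact mul_nonneg (mul_nonneg (hδ ij) h1) h2
  by_cases hN : Fintype.card (I × I) ≤ Γ
  · -- Γ large: take everything
    refine ⟨∑ ij : I × I, f ij, ⟨⟨Finset.univ, by simpa using hN, rfl⟩, ?_⟩,
      ⟨⟨0, f, le_refl 0, hf0, fun ij => by simp [hf], by simp⟩, ?_⟩⟩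
    · rintro v ⟨S, hS, rfl⟩
      exact Finset.sum_le_sum_of_subset_of_nonneg (Finset.subset_univ S)
        (fun ij _ _ => hf0 ij)
    · rintro w ⟨z, q, hz, hq, hfeas, rfl⟩
      exact weak_dual f Γ Finset.univ (by rw [Finset.card_univ]; exact hN)
        z q hz hq hfeas
  · push_neg at hN
    have hne : (Finset.univ : Finset (I × I)).Nonempty := by
      rw [← Finset.card_pos]
      have : 0 < Fintype.card (I × I) := lt_of_le_of_lt (Nat.zero_le Γ) hN
      simpa using this
    rcases Nat.eq_zero_or_pos Γ with hΓ | hΓ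
    · -- Γ = 0
      subst hΓ
      obtain ⟨M, _, hM⟩ := Finset.exists_max_image Finset.univ f hne
      refine ⟨0, ⟨⟨∅, by simp, by simp⟩, ?_⟩,
        ⟨⟨f M, fun _ => 0, hf0 M, fun _ => le_refl 0,
          fun ij => by simpa using hM ij (Finset.mem_univ ij), by simp⟩, ?_⟩⟩
      · rintro v ⟨S, hS, rfl⟩
        rw [Nat.le_zero, Finset.card_eq_zero] at hS
        simp [hS]
      · rintro w ⟨z, q, hz, hq, hfeas, rfl⟩
        simp only [Nat.cast_zero, zero_mul, zero_add]
        exact Finset.sum_nonneg fun ij _ => hq ij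
    · -- 0 < Γ < N : take T a maximizer among Γ-subsets
      obtain ⟨T₀, hT₀sub, hT₀card⟩ := Finset.exists_subset_card_eq
        (s := (Finset.univ : Finset (I × I))) (n := Γ)
        (by rw [Finset.card_univ]; exact hN.le)
      have hfin : ((Finset.univ : Finset (I × I)).powerset.filter
          (fun s => s.card = Γ)).Nonempty :=
        ⟨T₀, by simp [Finset.mem_filter, Finset.mem_powerset, hT₀sub, hT₀card]⟩
      obtain ⟨T, hTmem, hTmax⟩ := Finset.exists_max_image _
        (fun s => ∑ ij ∈ s, f ij) hfin
      have hTcard : T.card = Γ := (Finset.mem_filter.mp hTmem).2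
      have hTne : T.Nonempty := by
        rw [← Finset.card_pos, hTcard]; exact hΓ
      obtain ⟨m, hmT, hm⟩ := Finset.exists_min_image T f hTne
      set z : ℝ := f m with hzdef
      have hz : 0 ≤ z := hf0 m
      -- outside T, f ≤ z
      have hout : ∀ ij, ij ∉ T → f ij ≤ z := by
        intro ij hij
        by_contra hlt
        push_neg at hlt
        set T' := insert ij (T.erase m) with hT'
        have hijnot : ij ∉ T.erase m := fun h => hij (Finset.mem_of_mem_erase h)
        have hT'card : T'.card = Γ := by
          rw [hT', Finset.card_insert_of_notMem hijnot,
            Finset.card_erase_of_mem hmT, hTcard]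
          omega
        have hT'mem : T' ∈ (Finset.univ : Finset (I × I)).powerset.filter
            (fun s => s.card = Γ) := by
          simp [Finset.mem_filter, Finset.mem_powerset, hT'card]
        have hsum : ∑ ij' ∈ T', f ij' = ∑ ij' ∈ T.erase m, f ij' + f ij := by
          rw [hT', Finset.sum_insert hijnot]; ring
        have hsumT : ∑ ij' ∈ T.erase m, f ij' + f m = ∑ ij' ∈ T, f ij' :=
          Finset.sum_erase_add T f hmT
        have := hTmax T' hT'mem
        rw [hsum] at this
        linarith
      set q : I × I → ℝ := fun ij => max (f ij - z) 0 with hqdef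
      have hq0 : ∀ ij, 0 ≤ q ij := fun ij => le_max_right _ _
      have hqfeas : ∀ ij, f ij ≤ z + q ij := by
        intro ij
        have : f ij - z ≤ q ij := le_max_left _ _
        linarith
      have hqsum : ∑ ij : I × I, q ij = ∑ ij ∈ T, f ij - (Γ : ℝ) * z := by
        have h1 : ∑ ij ∈ T, q ij = ∑ ij : I × I, q ij :=
          Finset.sum_subset (Finset.subset_univ T) (by
            intro ij _ hij
            have := hout ij hij
            simp only [hqdef]
            rw [max_eq_right]; linarith)
        have h2 : ∑ ij ∈ T, q ij = ∑ ij ∈ T, (f ij - z) :=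
          Finset.sum_congr rfl (by
            intro ij hij
            simp only [hqdef]
            rw [max_eq_left]
            have := hm ij hij
            linarith)
        rw [← h1, h2, Finset.sum_sub_distrib, Finset.sum_const, hTcard,
          nsmul_eq_mul]
      refine ⟨∑ ij ∈ T, f ij, ⟨⟨T, hTcard.le, rfl⟩, ?_⟩,
        ⟨⟨z, q, hz, hq0, hqfeas, by rw [hqsum]; ring⟩, ?_⟩⟩
      · rintro v ⟨S, hS, rfl⟩
        obtain ⟨S', hSS', _, hS'card⟩ := Finset.exists_subsuperset_card_eq
          (Finset.subset_univ S) hS (by rw [Finset.card_univ]; exact hN.le)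
        have hS'mem : S' ∈ (Finset.univ : Finset (I × I)).powerset.filter
            (fun s => s.card = Γ) := by
          simp [Finset.mem_filter, Finset.mem_powerset, hS'card]
        calc ∑ ij ∈ S, f ij ≤ ∑ ij ∈ S', f ij :=
              Finset.sum_le_sum_of_subset_of_nonneg hSS' (fun ij _ _ => hf0 ij)
          _ ≤ ∑ ij ∈ T, f ij := hTmax S' hS'mem
      · rintro w ⟨z', q', hz', hq', hfeas', rfl⟩
        exact weak_dual f Γ T hTcard.le z' q' hz' hq' hfeas'
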